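/- Third isomorphism theorem for hom-modules: let M be a right R-hom-module over a non-unital hom-associative ring R, and let L ⊆ N be hom-submodules of M. Then N/L is a hom-submodule of M/L, and (M/L)/(N/L) ≅ M/N as right R-hom-modules. -/
import Mathlib


/-- A non-unital hom-associative ring structure on an additive abelian group `R`:
a biadditive multiplication `mul` and an additive twisting map `α` satisfying
`α a * (b * c) = (a * b) * α c`. -/
structure IsHomRing {R : Type*} [AddCommGroup R] (mul : R → R → R) (α : R → R) : Prop where
  add_mul : ∀ a b c : R, mul (a + b) c = mul a c + mul b c
  mul_add : ∀ a b c : R, mul a (b + c) = mul a b + mul a c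
  alpha_add : ∀ a b : R, α (a + b) = α a + α b
  hom_assoc : ∀ a b c : R, mul (α a) (mul b c) = mul (mul a b) (α c)

/-- A right `R`-hom-module structure on an additive abelian group `M`:
a biadditive scalar multiplication `smul : M → R → M` and an additive map `αM`
satisfying `αM m • (r * s) = (m • r) • αR s`. -/
structure IsHomModule {R M : Type*} [AddCommGroup R] [AddCommGroup M]
    (mul : R → R → R) (αR : R → R) (smul : M → R → M) (αM : M → M) : Prop where
  add_smul : ∀ (m n : M) (r : R), smul (m + n) r = smul m r + smul n r
  smul_add : ∀ (m : M) (r s : R), smul m (r + s) = smul m r + smul m s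
  alpha_add : ∀ m n : M, αM (m + n) = αM m + αM n
  hom_assoc : ∀ (m : M) (r s : R), smul (αM m) (mul r s) = smul (smul m r) (αR s)

/-- A hom-submodule: an additive subgroup (as a set) closed under the scalar
multiplication and invariant under the twisting map. -/
structure IsHomSubmodule {R M : Type*} [AddCommGroup M]
    (smul : M → R → M) (αM : M → M) (N : Set M) : Prop where
  zero_mem : (0 : M) ∈ N
  add_mem : ∀ a b : M, a ∈ N → b ∈ N → a + b ∈ N
  neg_mem : ∀ a : M, a ∈ N → -a ∈ N
  smul_mem : ∀ a : M, a ∈ N → ∀ r : R, smul a r ∈ N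
  alpha_mem : ∀ a : M, a ∈ N → αM a ∈ N

/-- A morphism of right `R`-hom-modules: an additive map commuting with the
twisting maps and preserving scalar multiplication. -/
def IsHomModuleHom {R M M' : Type*} [AddCommGroup M] [AddCommGroup M']
    (smul : M → R → M) (αM : M → M) (smul' : M' → R → M') (αM' : M' → M')
    (f : M → M') : Prop :=
  (∀ a b : M, f (a + b) = f a + f b) ∧ (∀ m : M, f (αM m) = αM' (f m)) ∧
    ∀ (m : M) (r : R), f (smul m r) = smul' (f m) r

/-- A right hom-module is hom-noetherian if it has no infinite strictly
ascending chain of hom-submodules. -/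
def HomNoetherian {R M : Type*} [AddCommGroup M] (smul : M → R → M) (αM : M → M) : Prop :=
  ¬ ∃ c : ℕ → Set M, (∀ n, IsHomSubmodule smul αM (c n)) ∧ ∀ n, c n ⊂ c (n + 1)

/-- the third isomorphism theorem for hom-modules: for hom-submodules
L ⊆ N of M, N/L is a hom-submodule of M/L and (M/L)/(N/L) ≅ M/N as right
R-hom-modules. The quotient hom-module operations are the induced ones. -/
theorem third_isomorphism_theorem {R M : Type*} [AddCommGroup R] [AddCommGroup M]
    (mul : R → R → R) (αR : R → R) (hR : IsHomRing mul αR)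
    (smul : M → R → M) (αM : M → M) (hM : IsHomModule mul αR smul αM)
    (L N : AddSubgroup M) (hLN : L ≤ N)
    (hL : IsHomSubmodule smul αM (L : Set M)) (hN : IsHomSubmodule smul αM (N : Set M))
    -- the induced hom-module operations on M/L
    (qLsmul : M ⧸ L → R → M ⧸ L) (qLα : M ⧸ L → M ⧸ L)
    (hqLsmul : ∀ (m : M) (r : R),
      qLsmul (QuotientAddGroup.mk m) r = QuotientAddGroup.mk (smul m r))
    (hqLα : ∀ m : M, qLα (QuotientAddGroup.mk m) = QuotientAddGroup.mk (αM m))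
    -- the induced hom-module operations on M/N
    (qNsmul : M ⧸ N → R → M ⧸ N) (qNα : M ⧸ N → M ⧸ N)
    (hqNsmul : ∀ (m : M) (r : R),
      qNsmul (QuotientAddGroup.mk m) r = QuotientAddGroup.mk (smul m r))
    (hqNα : ∀ m : M, qNα (QuotientAddGroup.mk m) = QuotientAddGroup.mk (αM m))
    -- the induced hom-module operations on (M/L)/(N/L), where N/L is the image of N in M/L
    (q3smul : (M ⧸ L) ⧸ N.map (QuotientAddGroup.mk' L) → R →
      (M ⧸ L) ⧸ N.map (QuotientAddGroup.mk' L))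
    (q3α : (M ⧸ L) ⧸ N.map (QuotientAddGroup.mk' L) →
      (M ⧸ L) ⧸ N.map (QuotientAddGroup.mk' L))
    (hq3smul : ∀ (x : M ⧸ L) (r : R),
      q3smul (QuotientAddGroup.mk x) r = QuotientAddGroup.mk (qLsmul x r))
    (hq3α : ∀ x : M ⧸ L, q3α (QuotientAddGroup.mk x) = QuotientAddGroup.mk (qLα x)) :
    IsHomSubmodule qLsmul qLα ((N.map (QuotientAddGroup.mk' L) : AddSubgroup (M ⧸ L)) : Set (M ⧸ L)) ∧
    ∃ g : (M ⧸ L) ⧸ N.map (QuotientAddGroup.mk' L) → M ⧸ N,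
      Function.Bijective g ∧
      (∀ m : M, g (QuotientAddGroup.mk (QuotientAddGroup.mk m)) = QuotientAddGroup.mk m) ∧
      IsHomModuleHom q3smul q3α qNsmul qNα g := by
  constructor
  · constructor
    · exact AddSubgroup.zero_mem _
    · exact fun a b ha hb => AddSubgroup.add_mem _ ha hb
    · exact fun a ha => AddSubgroup.neg_mem _ ha
    · rintro a ⟨n, hn, rfl⟩ r
      exact ⟨smul n r, hN.smul_mem n hn r, (hqLsmul n r).symm⟩
    · rintro a ⟨n, hn, rfl⟩
      exact ⟨αM n, hN.alpha_mem n hn, (hqLα n).symm⟩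
  · have hg : ∀ m : M, (QuotientAddGroup.quotientQuotientEquivQuotient L N hLN)
        ((QuotientAddGroup.mk (QuotientAddGroup.mk m : M ⧸ L))) = QuotientAddGroup.mk m :=
      fun m => QuotientAddGroup.quotientQuotientEquivQuotientAux_mk_mk L N hLN m
    refine ⟨QuotientAddGroup.quotientQuotientEquivQuotient L N hLN, (QuotientAddGroup.quotientQuotientEquivQuotient L N hLN).bijective, hg, ?_, ?_, ?_⟩
    · exact fun a b => map_add _ a b
    · intro x
      induction x using QuotientAddGroup.induction_on with
      | H y =>
        induction y using QuotientAddGroup.induction_on with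
        | H m =>
          rw [hq3α, hqLα, hg, hg, hqNα]
    · intro x r
      induction x using QuotientAddGroup.induction_on with
      | H y =>
        induction y using QuotientAddGroup.induction_on with
        | H m =>
          rw [hq3smul, hqLsmul, hg, hg, hqNsmul]
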